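/- Let n ≥ 3 and let i, j, k in {1,...,n} be distinct. In the group G := Graphs(n+1) ⋊ S_{n+1}, where S_{n+1} acts on graphs on vertices {0,...,n} by permuting vertices, define x_m := (e_{0m}, (0 m)) for m = 1,...,n, where e_{0m} is the graph with single edge {0,m}. Then (x_i x_j x_i x_k)^2 = (e_{0i} + e_{ik} + e_{kj} + e_{j0}, id), the 4-cycle graph on vertices 0, i, k, j with identity permutation. -/

import Mathlib

open Equiv Finset

abbrev Vtx (n : ℕ) := Fin (n+1)
abbrev Edge (n : ℕ) := {e : Sym2 (Vtx n) // ¬ e.IsDiag}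
abbrev Graphs (n : ℕ) := Edge n → ZMod 2

/-- relabelling of edges by a permutation of vertices -/
def permEdge {n : ℕ} (σ : Perm (Vtx n)) : Edge n ≃ Edge n where
  toFun e := ⟨Sym2.map σ e.1, by
    simpa [Sym2.isDiag_map σ.injective] using e.2⟩
  invFun e := ⟨Sym2.map σ.symm e.1, by
    simpa [Sym2.isDiag_map σ.symm.injective] using e.2⟩
  left_inv e := by
    ext1
    simp [Sym2.map_map]
  right_inv e := by
    ext1
    simp [Sym2.map_map]

/-- action of a vertex permutation on graphs -/
def gact {n : ℕ} (σ : Perm (Vtx n)) : Graphs n ≃+ Graphs n where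
  toFun g := fun e => g ((permEdge σ).symm e)
  invFun g := fun e => g (permEdge σ e)
  left_inv g := by funext e; simp
  right_inv g := by funext e; simp
  map_add' g h := rfl

lemma gact_mul {n : ℕ} (σ τ : Perm (Vtx n)) (g : Graphs n) :
    gact (σ * τ) g = gact σ (gact τ g) := by
  funext e
  simp only [gact, AddEquiv.coe_mk, Equiv.coe_fn_mk, Equiv.symm]
  congr 1
  ext1
  simp [permEdge, Sym2.map_map]
  rfl

/-- the action as a homomorphism to automorphisms, multiplicatively -/
def φn (n : ℕ) : Perm (Vtx n) →* MulAut (Multiplicative (Graphs n)) where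
  toFun σ := AddEquiv.toMultiplicative (gact σ)
  map_one' := by
    ext g e
    simp [gact, permEdge]
    first
      | rfl
      | exact congrArg (fun x => Multiplicative.toAdd g x) (Subtype.ext (congrFun Sym2.map_id _))
  map_mul' σ τ := by
    ext g e
    exact congrFun (gact_mul σ τ g.toAdd) e

/-- the ambient group `Graphs(n+1) ⋊ S_{n+1}` -/
abbrev DG (n : ℕ) := SemidirectProduct (Multiplicative (Graphs n)) (Perm (Vtx n)) (φn n)

/-- the single-edge graph with edge `{u,v}` -/
def single {n : ℕ} (u v : Vtx n) : Graphs n :=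
  fun e => if e.1 = s(u, v) then 1 else 0

/-- the generator `x_m = (e_{0m}, (0 m))` -/
def xgen {n : ℕ} (m : Vtx n) : DG n :=
  ⟨Multiplicative.ofAdd (single 0 m), Equiv.swap 0 m⟩

/-- the degree of a vertex in a graph -/
def deg {n : ℕ} (g : Graphs n) (v : Vtx n) : ℕ :=
  (Finset.univ.filter (fun e : Edge n => v ∈ e.1 ∧ g e = 1)).card

/-- the number of edges of a graph -/
def nedges {n : ℕ} (g : Graphs n) : ℕ :=
  (Finset.univ.filter (fun e : Edge n => g e = 1)).card

/-- all degrees even and an even number of edges -/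
def evenGraph {n : ℕ} (g : Graphs n) : Prop :=
  (∀ v : Vtx n, Even (deg g v)) ∧ Even (nedges g)

/-- the subgroup generated by the `x_m`, `m = 1, …, n` -/
def Dn (n : ℕ) : Subgroup (DG n) :=
  Subgroup.closure {x | ∃ m : Vtx n, m ≠ 0 ∧ x = xgen m}

/-- the complete graph -/
def complete (n : ℕ) : Graphs n := fun _ => 1

lemma gact_single {n : ℕ} (σ : Perm (Vtx n)) (u v : Vtx n) :
    gact σ (single u v) = single (σ u) (σ v) := by
  funext e
  show (if Sym2.map σ.symm e.1 = s(u, v) then (1 : ZMod 2) else 0) =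
      (if e.1 = s(σ u, σ v) then 1 else 0)
  have key : Sym2.map (⇑σ.symm) e.1 = s(u, v) ↔ e.1 = s(σ u, σ v) := by
    constructor
    · intro h
      have h2 := congrArg (Sym2.map σ) h
      simpa [Sym2.map_map] using h2
    · intro h
      rw [h]
      simp [Sym2.map_pair_eq]
  simp [key]

lemma single_comm {n : ℕ} (u v : Vtx n) : single u v = single v u := by
  funext e
  simp [single, Sym2.eq_swap]

lemma graph_add_self {n : ℕ} (g : Graphs n) : g + g = 0 := by
  funext e
  exact CharTwo.add_self_eq_zero _

lemma graph_two_nsmul {n : ℕ} (g : Graphs n) : (2 : ℕ) • g = 0 := by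
  rw [two_nsmul]; exact graph_add_self g

/-- For `n ≥ 3` and distinct `i, j, k ∈ {1,…,n}`, in `Graphs(n+1) ⋊ S_{n+1}` one has
`(x_i x_j x_i x_k)² = (e_{0i} + e_{ik} + e_{kj} + e_{j0}, id)`, the 4-cycle graph on
the vertices `0, i, k, j` paired with the identity permutation. -/
theorem stmt4 (n : ℕ) (hn : 3 ≤ n) (i j k : Vtx n)
    (hi : i ≠ 0) (hj : j ≠ 0) (hk : k ≠ 0)
    (hij : i ≠ j) (hik : i ≠ k) (hjk : j ≠ k) :
    (xgen i * xgen j * xgen i * xgen k) ^ 2 =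
      ⟨Multiplicative.ofAdd (single 0 i + single i k + single k j + single j 0), 1⟩ := by
  have hφ : ∀ (σ : Perm (Vtx n)) (g : Graphs n),
      (φn n σ) (Multiplicative.ofAdd g) = Multiplicative.ofAdd (gact σ g) := fun _ _ => rfl
  refine SemidirectProduct.ext ?_ ?_
  · simp only [sq, SemidirectProduct.mul_left, xgen, map_mul, hφ, ← ofAdd_add, gact_mul,
      SemidirectProduct.mul_right, gact_single, swap_apply_left, swap_apply_right,
      swap_apply_of_ne_of_ne hi hij, swap_apply_of_ne_of_ne hj hij.symm,
      swap_apply_of_ne_of_ne hk hik.symm, swap_apply_of_ne_of_ne hk hjk.symm,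
      swap_apply_of_ne_of_ne hi hik, swap_apply_of_ne_of_ne hj hjk, MulAut.mul_apply, map_add]
    refine congrArg _ ?_
    rw [show single j i = single i j from single_comm j i,
      show (single k 0 : Graphs n) = single 0 k from single_comm k 0]
    abel_nf
    simp [graph_two_nsmul, two_mul, graph_add_self]
  · have h1 : swap (0 : Vtx n) i * swap 0 j * swap 0 i = swap i j := by
      rw [swap_comm (0 : Vtx n) j]
      exact swap_mul_swap_mul_swap hj hij.symm
    have hc : swap (0 : Vtx n) k * swap i j = swap i j * swap (0 : Vtx n) k := by
      have h2 : swap i j = swap (0 : Vtx n) k * swap i j * (swap (0 : Vtx n) k)⁻¹ := by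
        rw [← swap_apply_apply, swap_apply_of_ne_of_ne hi hik,
          swap_apply_of_ne_of_ne hj hjk]
      calc swap (0 : Vtx n) k * swap i j
          = swap (0 : Vtx n) k * swap i j * (swap (0 : Vtx n) k)⁻¹ * swap (0 : Vtx n) k := by
            group
        _ = swap i j * swap (0 : Vtx n) k := by rw [← h2]
    simp only [sq, SemidirectProduct.mul_right, xgen]
    rw [h1, mul_assoc, ← mul_assoc (swap (0 : Vtx n) k), hc, mul_assoc, swap_mul_self,
      mul_one, swap_mul_self]
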